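/- Let Γ be a multigraph of loop-free circuit rank 0 with vertex set V, g an integer, and let φ ∈ V(Γ) be nondegenerate. Then there exists a function d: V → ℤ with Σ_{v∈V} d(v) = g−1 such that |Σ_{v∈S} d(v) − Σ_{v∈S} φ(v)| < cut(S)/2 for every nonempty proper subset S ⊊ V (that is, a φ-stable multidegree of a line bundle exists); moreover, any two such functions d are equal. -/

import Mathlib

namespace ThetaPaper

/-- The adjacency relation within a vertex set `S`: `a` and `b` lie in `S`
and are joined by an edge of the multigraph with edge-endpoint map `ends`. -/
def AdjOn {V E : Type} (ends : E → Sym2 V) (S : Set V) (a b : V) : Prop :=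
  a ∈ S ∧ b ∈ S ∧ ∃ e, ends e = s(a, b)

/-- The induced subgraph on `S` is (nonempty and) connected. -/
def ConnectedOn {V E : Type} (ends : E → Sym2 V) (S : Set V) : Prop :=
  S.Nonempty ∧ ∀ a ∈ S, ∀ b ∈ S, Relation.ReflTransGen (AdjOn ends S) a b

/-- The multigraph is connected. -/
def GraphConnected {V E : Type} (ends : E → Sym2 V) : Prop :=
  ConnectedOn ends Set.univ

/-- A nonempty proper subset `S` of the vertices is elementary if both the induced
subgraph on `S` and the induced subgraph on its complement are connected. -/
def Elementary {V E : Type} (ends : E → Sym2 V) (S : Set V) : Prop :=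
  S.Nonempty ∧ Sᶜ.Nonempty ∧ ConnectedOn ends S ∧ ConnectedOn ends Sᶜ

/-- `cut S` is the number of edges with one endpoint in `S` and the other outside. -/
noncomputable def cut {V E : Type} (ends : E → Sym2 V) (S : Set V) : ℕ :=
  Nat.card {e : E // ∃ a b, ends e = s(a, b) ∧ a ∈ S ∧ b ∉ S}

/-- `ℓ(S,d)(φ) = d − Σ_{v∈S} φ(v) + cut(S)/2`. -/
noncomputable def ell {V E : Type} (ends : E → Sym2 V) (S : Set V) (d : ℤ) (φ : V → ℝ) : ℝ :=
  (d : ℝ) - (∑ᶠ v ∈ S, φ v) + (cut ends S : ℝ) / 2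

/-- `φ` is nondegenerate: it lies on no stability hyperplane. -/
def Nondegenerate {V E : Type} (ends : E → Sym2 V) (φ : V → ℝ) : Prop :=
  ∀ S : Set V, Elementary ends S → ∀ d : ℤ, ell ends S d φ ≠ 0

/-- The multigraph has loop-free circuit rank 0: after deleting all loops it is a tree
(connected, with number of edges = number of vertices − 1). -/
def RankZero {V E : Type} [Fintype V] (ends : E → Sym2 V) : Prop :=
  GraphConnected (fun e : {e : E // ¬ (ends e).IsDiag} => ends e.1) ∧
  Nat.card {e : E // ¬ (ends e).IsDiag} + 1 = Fintype.card V

/-- A sheaf model of degree `g−1`: a multidegree `dd` on the vertices together with a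
set `N` of nodes (where the corresponding sheaf fails to be locally free), with
`Σ dd + #N = g − 1`. -/
def IsSheafModel {V E : Type} [Fintype V] (dd : V → ℤ) (N : Set E) (g : ℤ) : Prop :=
  (∑ v, dd v) + (Nat.card N : ℤ) = g - 1

/-- The degree of the sheaf model `(dd, N)` on the subcurve with vertex set `S`:
`Σ_{v∈S} dd v` plus the number of edges of `N` with both endpoints in `S`. -/
noncomputable def degS {V E : Type} (ends : E → Sym2 V) (dd : V → ℤ) (N : Set E)
    (S : Set V) : ℤ :=
  (∑ᶠ v ∈ S, dd v) + (Nat.card {e : E // e ∈ N ∧ ∀ v ∈ ends e, v ∈ S} : ℤ)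

/-- `φ`-semistability of a sheaf model. -/
def Semistable {V E : Type} (ends : E → Sym2 V) (dd : V → ℤ) (N : Set E)
    (φ : V → ℝ) : Prop :=
  ∀ S : Set V, S.Nonempty → S ≠ Set.univ →
    (∑ᶠ v ∈ S, φ v) - (cut ends S : ℝ) / 2 ≤ (degS ends dd N S : ℝ)

/-- `φ`-stability of a sheaf model. -/
def Stable {V E : Type} (ends : E → Sym2 V) (dd : V → ℤ) (N : Set E)
    (φ : V → ℝ) : Prop :=
  ∀ S : Set V, S.Nonempty → S ≠ Set.univ →
    (∑ᶠ v ∈ S, φ v) - (cut ends S : ℝ) / 2 < (degS ends dd N S : ℝ)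

/-- The set of nondegenerate elements of the affine space `V(Γ)` (with the real
number `gr` playing the role of `g`). -/
def OmegaSet {V E : Type} [Fintype V] (ends : E → Sym2 V) (gr : ℝ) : Set (V → ℝ) :=
  {φ | (∑ v, φ v) = gr - 1 ∧ Nondegenerate ends φ}

/-- `P` is a stability polytope of `V(Γ)`: a connected component of the complement in
`V(Γ)` of the union of all stability hyperplanes. -/
def IsStabPolytope {V E : Type} [Fintype V] (ends : E → Sym2 V) (gr : ℝ)
    (P : Set (V → ℝ)) : Prop :=
  ∃ φ0 ∈ OmegaSet ends gr, P = connectedComponentIn (OmegaSet ends gr) φ0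

-- ### auxiliary development

open Finset SimpleGraph

variable {V E : Type}

/-- The simple graph underlying the multigraph. -/
def Gr (ends : E → Sym2 V) : SimpleGraph V where
  Adj a b := a ≠ b ∧ ∃ e, ends e = s(a, b)
  symm := by
    constructor; rintro a b ⟨hab, e, he⟩
    exact ⟨hab.symm, e, by rwa [Sym2.eq_swap]⟩
  loopless := by constructor; rintro a ⟨h, -⟩; exact h rfl

lemma gr_connected [Fintype V] (ends : E → Sym2 V) (hrk : RankZero ends) :
    (Gr ends).Connected := by
  have hne : Nonempty V := by
    by_contra h
    rw [not_nonempty_iff] at h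
    have := hrk.2
    simp [Fintype.card_eq_zero] at this
  refine ⟨fun a b => ?_⟩
  have h := hrk.1.2 a trivial b trivial
  rw [reachable_iff_reflTransGen]
  refine Relation.ReflTransGen.mono ?_ a b h
  rintro x y ⟨-, -, ⟨e, he⟩⟩
  refine ⟨?_, e.1, he⟩
  rintro rfl
  exact e.2 (by rw [show ends e.1 = s(x, x) from he]; exact Sym2.mk_isDiag_iff.mpr rfl)

/-- Deleting a non-bridge edge keeps the graph connected and drops the edge count by one. -/
lemma delete_nonbridge [Fintype V] {G : SimpleGraph V} (hG : G.Connected) {a b : V}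
    (hab : G.Adj a b) (hr : (G \ fromEdgeSet {s(a, b)}).Reachable a b) :
    (G \ fromEdgeSet {s(a, b)}).Connected ∧
      Nat.card (G \ fromEdgeSet {s(a, b)}).edgeSet + 1 = Nat.card G.edgeSet := by
  classical
  set G' := G \ fromEdgeSet {s(a, b)} with hG'
  have hstep : ∀ x y : V, G.Adj x y → G'.Reachable x y := by
    intro x y hxy
    by_cases hs : s(x, y) = s(a, b)
    · rw [Sym2.eq_iff] at hs
      rcases hs with ⟨rfl, rfl⟩ | ⟨rfl, rfl⟩
      · exact hr
      · exact hr.symm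
    · exact Adj.reachable (by simp [hG', sdiff_adj, fromEdgeSet_adj, hxy, hs])
  haveI := hG.nonempty
  have hconn : G'.Connected := by
    refine ⟨fun x y => ?_⟩
    have := (hG.preconnected x y)
    rw [reachable_iff_reflTransGen] at this
    induction this with
    | refl => exact Reachable.refl _
    | tail _ h ih => exact ih.trans (hstep _ _ h)
  refine ⟨hconn, ?_⟩
  have hedge : G'.edgeSet = G.edgeSet \ {s(a, b)} := by
    rw [hG', edgeSet_sdiff, edgeSet_fromEdgeSet, edgeSet_sdiff_sdiff_isDiag]
  have hmem : s(a, b) ∈ G.edgeSet := hab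
  have hfin : G.edgeSet.Finite := Set.toFinite _
  rw [hedge, Nat.card_coe_set_eq, Nat.card_coe_set_eq,
    Set.ncard_diff_singleton_of_mem hmem]
  exact Nat.sub_add_cancel ((Set.ncard_pos hfin).mpr ⟨_, hmem⟩)

lemma sym2_rep {V : Type} (z : Sym2 V) : ∃ x y, z = s(x, y) :=
  Sym2.ind (fun x y => ⟨x, y, rfl⟩) z

/-- A connected graph on a finite vertex set has at least `card V - 1` edges,
proved together with: if moreover it has exactly `card V - 1` edges it is a tree. -/
lemma card_le_of_connected [Fintype V] :
    ∀ (n : ℕ) (G : SimpleGraph V), G.Connected → Nat.card G.edgeSet = n →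
      Fintype.card V ≤ n + 1 := by
  intro n
  induction n with
  | zero =>
    intro G hG hcard
    classical
    haveI : Fintype G.edgeSet := Set.Finite.fintype (Set.toFinite _)
    have hacy : G.IsAcyclic := by
      rw [isAcyclic_iff_forall_edge_isBridge]
      intro e he
      exfalso
      have : Nat.card G.edgeSet ≠ 0 := by
        rw [Nat.card_eq_fintype_card]
        simp only [← Set.toFinset_card]
        exact Finset.card_ne_zero_of_mem (Set.mem_toFinset.mpr he)
      exact this hcard
    have := SimpleGraph.IsTree.card_edgeFinset ⟨hG, hacy⟩
    rw [← this, edgeFinset_card, ← Nat.card_eq_fintype_card, hcard]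
  | succ n ih =>
    intro G hG hcard
    classical
    by_cases hbr : ∃ a b : V, G.Adj a b ∧ (G \ fromEdgeSet {s(a, b)}).Reachable a b
    · obtain ⟨a, b, hab, hr⟩ := hbr
      obtain ⟨hconn, hcount⟩ := delete_nonbridge hG hab hr
      have : Nat.card (G \ fromEdgeSet {s(a, b)}).edgeSet = n := by omega
      exact le_trans (ih _ hconn this) (by omega)
    · push_neg at hbr
      have hacy : G.IsAcyclic := by
        rw [isAcyclic_iff_forall_adj_isBridge]
        intro v w hvw
        exact hbr v w hvw
      haveI : Fintype G.edgeSet := Set.Finite.fintype (Set.toFinite _)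
      have := SimpleGraph.IsTree.card_edgeFinset ⟨hG, hacy⟩
      rw [← this, edgeFinset_card, ← Nat.card_eq_fintype_card, hcard]

/-- From rank zero: the simple graph is a tree, and distinct edges of the multigraph
have distinct endpoint pairs (when not loops). -/
lemma tree_and_inj [Fintype V] (ends : E → Sym2 V) (hrk : RankZero ends) :
    (Gr ends).IsTree ∧
      ∀ e e' (a b : V), a ≠ b → ends e = s(a, b) → ends e' = s(a, b) → e = e' := by
  classical
  have hconn := gr_connected ends hrk
  -- the surjection from non-loop edges onto the edge set of `Gr ends`
  have hsurj : ∀ z : (Gr ends).edgeSet, ∃ t : {e : E // ¬ (ends e).IsDiag}, ends t.1 = z.1 := by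
    rintro ⟨z, hz⟩
    induction z with
    | _ x y =>
      obtain ⟨hxy, e, he⟩ := (mem_edgeSet _).mp hz
      exact ⟨⟨e, by rw [he]; simpa using hxy⟩, he⟩
  -- lower bound on the number of simple edges
  have hlow := card_le_of_connected (Nat.card (Gr ends).edgeSet) (Gr ends) hconn rfl
  -- upper bound: the surjection
  have hTcard : Nat.card {e : E // ¬ (ends e).IsDiag} + 1 = Fintype.card V := hrk.2
  -- define the map
  set f : {e : E // ¬ (ends e).IsDiag} → (Gr ends).edgeSet := fun t =>
    ⟨ends t.1, by
      obtain ⟨x, y, hxy⟩ := sym2_rep (ends t.1)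
      rw [hxy, mem_edgeSet]
      refine ⟨?_, t.1, hxy⟩
      rintro rfl
      exact t.2 (by rw [hxy]; exact Sym2.mk_isDiag_iff.mpr rfl)⟩ with hf
  have hfsurj : Function.Surjective f := by
    intro z
    obtain ⟨t, ht⟩ := hsurj z
    exact ⟨t, Subtype.ext ht⟩
  -- finiteness of T
  haveI : Nonempty V := hconn.nonempty
  by_cases hV1 : Fintype.card V = 1
  · -- then there are no simple edges and at most ... everything trivial
    have hTempty : IsEmpty {e : E // ¬ (ends e).IsDiag} := by
      rw [isEmpty_iff]
      rintro ⟨e, he⟩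
      obtain ⟨x, y, hxy⟩ := sym2_rep (ends e)
      have : x = y := by
        have := Fintype.card_le_one_iff.mp (le_of_eq hV1)
        exact this x y
      exact he (by rw [hxy, this]; exact Sym2.mk_isDiag_iff.mpr rfl)
    have hEedge : IsEmpty (Gr ends).edgeSet := ⟨fun z => (hsurj z).elim (fun t _ => hTempty.false t)⟩
    constructor
    · refine ⟨hconn, ?_⟩
      intro v c hc
      exfalso
      cases c with
      | nil => exact hc.ne_nil rfl
      | cons h p => exact hEedge.false ⟨_, (mem_edgeSet _).mpr h⟩
    · intro e e' a b hab he he'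
      exact absurd (hTempty.false ⟨e, by rw [he]; simpa using hab⟩) not_false
  · have hT2 : 2 ≤ Fintype.card V := by
      have : 1 ≤ Fintype.card V := Fintype.card_pos
      omega
    have hTfin : Finite {e : E // ¬ (ends e).IsDiag} := by
      by_contra h
      rw [not_finite_iff_infinite] at h
      rw [Nat.card_eq_zero_of_infinite] at hTcard
      omega
    haveI := hTfin
    haveI : Fintype {e : E // ¬ (ends e).IsDiag} := Fintype.ofFinite _
    haveI : Fintype (Gr ends).edgeSet := Set.Finite.fintype (Set.toFinite _)
    have hcard1 : Fintype.card (Gr ends).edgeSet ≤ Fintype.card {e : E // ¬ (ends e).IsDiag} :=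
      Fintype.card_le_of_surjective f hfsurj
    have hcard2 : Fintype.card V ≤ Fintype.card (Gr ends).edgeSet + 1 := by
      rw [← Nat.card_eq_fintype_card (α := (Gr ends).edgeSet)]; exact hlow
    have hTc : Fintype.card {e : E // ¬ (ends e).IsDiag} = Fintype.card V - 1 := by
      rw [← Nat.card_eq_fintype_card]; omega
    have hcards : Fintype.card {e : E // ¬ (ends e).IsDiag} = Fintype.card (Gr ends).edgeSet := by
      omega
    have hfbij : Function.Bijective f :=
      (Fintype.bijective_iff_surjective_and_card f).mpr ⟨hfsurj, hcards⟩
    have hinj : ∀ e e' (a b : V), a ≠ b → ends e = s(a, b) → ends e' = s(a, b) → e = e' := by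
      intro e e' a b hab he he'
      have h1 : ¬ (ends e).IsDiag := by rw [he]; simpa using hab
      have h2 : ¬ (ends e').IsDiag := by rw [he']; simpa using hab
      have : f ⟨e, h1⟩ = f ⟨e', h2⟩ := Subtype.ext (by simp only [hf]; rw [he, he'])
      exact congrArg Subtype.val (hfbij.1 this)
    refine ⟨⟨hconn, ?_⟩, hinj⟩
    -- acyclicity: deleting any edge would contradict the count
    rw [isAcyclic_iff_forall_adj_isBridge]
    intro v w hvw
    rw [isBridge_iff]
    refine fun hr => ?_
    obtain ⟨hconn', hcount⟩ := delete_nonbridge hconn hvw hr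
    have hlow' := card_le_of_connected _ _ hconn' rfl
    have : Nat.card (Gr ends).edgeSet = Fintype.card V - 1 := by
      rw [Nat.card_eq_fintype_card]; omega
    omega
/-- The component of `b` in the tree with the edge `ab` removed:
vertices reachable from `b` by walks avoiding the edge `s(a,b)`. -/
def side (ends : E → Sym2 V) (a b : V) : Set V :=
  {v | ∃ p : (Gr ends).Walk b v, s(a, b) ∉ p.edges}

lemma mem_side_self (ends : E → Sym2 V) (a b : V) : b ∈ side ends a b :=
  ⟨Walk.nil, by simp⟩

lemma side_extend {ends : E → Sym2 V} {a b w u : V} (hw : w ∈ side ends a b)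
    (h : (Gr ends).Adj w u) (hne : s(w, u) ≠ s(a, b)) : u ∈ side ends a b := by
  obtain ⟨p, hp⟩ := hw
  refine ⟨p.concat h, ?_⟩
  rw [Walk.edges_concat, List.concat_eq_append, List.mem_append]
  rintro (h1 | h2)
  · exact hp h1
  · rw [List.mem_singleton] at h2; exact hne (h2 ▸ rfl)

variable {ends : E → Sym2 V} {a b : V}

lemma not_mem_side (ht : (Gr ends).IsTree) (hab : (Gr ends).Adj a b) :
    a ∉ side ends a b := by
  rintro ⟨p, hp⟩
  have hbridge := (isAcyclic_iff_forall_adj_isBridge.mp ht.2) hab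
  rw [isBridge_iff] at hbridge
  refine hbridge (reachable_delete_edges_iff_exists_walk.mpr ⟨p.reverse, ?_⟩)
  rw [Walk.edges_reverse, List.mem_reverse]
  exact hp

lemma side_disjoint (ht : (Gr ends).IsTree) (hab : (Gr ends).Adj a b) {v : V}
    (h1 : v ∈ side ends a b) (h2 : v ∈ side ends b a) : False := by
  obtain ⟨p, hp⟩ := h1
  obtain ⟨q, hq⟩ := h2
  have hbridge := (isAcyclic_iff_forall_adj_isBridge.mp ht.2) hab
  rw [isBridge_iff] at hbridge
  refine hbridge (reachable_delete_edges_iff_exists_walk.mpr ⟨q.append p.reverse, ?_⟩)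
  rw [Walk.edges_append, List.mem_append, Walk.edges_reverse, List.mem_reverse]
  rintro (h | h)
  · exact hq (by rwa [Sym2.eq_swap])
  · exact hp h

lemma side_union (ht : (Gr ends).IsTree) (v : V) :
    v ∈ side ends a b ∨ v ∈ side ends b a := by
  obtain ⟨p⟩ := ht.1.preconnected b v
  have key : ∀ {x y : V} (q : (Gr ends).Walk x y),
      x ∈ side ends a b ∨ x ∈ side ends b a →
      y ∈ side ends a b ∨ y ∈ side ends b a := by
    intro x y q
    induction q with
    | nil => exact id
    | @cons x' y' z' h q ih =>
      intro hx
      refine ih ?_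
      by_cases hs : s(x', y') = s(a, b)
      · rw [Sym2.eq_iff] at hs
        rcases hs with ⟨rfl, rfl⟩ | ⟨rfl, rfl⟩
        · exact Or.inl (mem_side_self ends _ _)
        · exact Or.inr (mem_side_self ends _ _)
      · rcases hx with hx | hx
        · exact Or.inl (side_extend hx h hs)
        · exact Or.inr (side_extend hx h (by rw [show s(b, a) = s(a, b) from Sym2.eq_swap]; exact hs))
  exact key p (Or.inl (mem_side_self ends a b))

lemma compl_side (ht : (Gr ends).IsTree) (hab : (Gr ends).Adj a b) :
    (side ends a b)ᶜ = side ends b a := by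
  ext v
  constructor
  · intro hv
    rcases side_union (a := a) (b := b) ht v with h | h
    · exact absurd h hv
    · exact h
  · intro hv hv'
    exact side_disjoint ht hab hv' hv
lemma adjOn_symm {ends : E → Sym2 V} {S : Set V} {x y : V} (h : AdjOn ends S x y) :
    AdjOn ends S y x := by
  obtain ⟨h1, h2, e, he⟩ := h
  exact ⟨h2, h1, e, by rwa [Sym2.eq_swap]⟩

lemma connectedOn_side {ends : E → Sym2 V} {a b : V} (ht : (Gr ends).IsTree)
    (hab : (Gr ends).Adj a b) : ConnectedOn ends (side ends a b) := by
  have key : ∀ {x y : V} (p : (Gr ends).Walk x y), s(a, b) ∉ p.edges →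
      x ∈ side ends a b →
      Relation.ReflTransGen (AdjOn ends (side ends a b)) x y := by
    intro x y p
    induction p with
    | nil => intro _ _; exact Relation.ReflTransGen.refl
    | @cons x' y' z' h q ih =>
      intro hp hx
      rw [Walk.edges_cons, List.mem_cons] at hp
      push_neg at hp
      have hy' : y' ∈ side ends a b := side_extend hx h hp.1.symm
      exact Relation.ReflTransGen.head ⟨hx, hy', h.2⟩ (ih hp.2 hy')
  refine ⟨⟨b, mem_side_self ends a b⟩, ?_⟩
  rintro x ⟨p, hp⟩ y ⟨q, hq⟩
  have h1 := key p hp (mem_side_self ends a b)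
  have h2 := key q hq (mem_side_self ends a b)
  exact Relation.ReflTransGen.trans
    (@Std.Symm.symm _ _ (@Relation.ReflTransGen.stdSymm _ _ ⟨fun _ _ => adjOn_symm⟩) _ _ h1) h2

lemma elementary_side {ends : E → Sym2 V} {a b : V} (ht : (Gr ends).IsTree)
    (hab : (Gr ends).Adj a b) : Elementary ends (side ends a b) := by
  refine ⟨⟨b, mem_side_self ends a b⟩, ⟨a, ?_⟩, connectedOn_side ht hab, ?_⟩
  · intro h; exact not_mem_side ht hab h
  · rw [compl_side ht hab]; exact connectedOn_side ht hab.symm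

/-- Existence of the neighbor through which `w ≠ v` is attached to `v`. -/
lemma exists_nbr {ends : E → Sym2 V} (ht : (Gr ends).IsTree) {v w : V} (hw : w ≠ v) :
    ∃ b, (Gr ends).Adj v b ∧ w ∈ side ends v b := by
  classical
  obtain ⟨p0⟩ := ht.1.preconnected v w
  have hpath := p0.toPath
  obtain ⟨p, hp⟩ := hpath
  cases p with
  | nil => exact absurd rfl hw
  | @cons vv u _ h q =>
    rw [Walk.cons_isPath_iff] at hp
    refine ⟨u, h, q, fun hmem => hp.2 ?_⟩
    exact Walk.fst_mem_support_of_mem_edges q hmem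

/-- Uniqueness of that neighbor. -/
lemma nbr_unique {ends : E → Sym2 V} (ht : (Gr ends).IsTree) {v w b c : V}
    (hb : (Gr ends).Adj v b) (hwb : w ∈ side ends v b)
    (hc : (Gr ends).Adj v c) (hwc : w ∈ side ends v c) : b = c := by
  have hw : w ≠ v := by
    rintro rfl
    exact side_disjoint ht hb hwb (mem_side_self ends b _)
  classical
  obtain ⟨p0⟩ := ht.1.preconnected v w
  obtain ⟨p, hp⟩ := p0.toPath
  cases p with
  | nil => exact absurd rfl hw
  | @cons _ u _ h q =>
    rw [Walk.cons_isPath_iff] at hp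
    have key : ∀ x : V, (Gr ends).Adj v x → w ∈ side ends v x → u = x := by
      intro x hx hwx
      by_contra hux
      -- the path `cons h q` avoids the edge `s(v,x)`
      have havoid : s(v, x) ∉ (Walk.cons h q).edges := by
        rw [Walk.edges_cons, List.mem_cons]
        rintro (heq | hmem)
        · rw [Sym2.eq_iff] at heq
          rcases heq with ⟨-, h2⟩ | ⟨h1, -⟩
          · exact hux h2.symm
          · exact (Gr ends).loopless.irrefl u (h1 ▸ h)
        · exact hp.2 (Walk.fst_mem_support_of_mem_edges q hmem)
      -- hence `v` is in `side v x`, contradiction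
      obtain ⟨r, hr⟩ := hwx
      have : v ∈ side ends v x :=
        ⟨r.append (Walk.cons h q).reverse, by
          rw [Walk.edges_append, List.mem_append, Walk.edges_reverse, List.mem_reverse]
          rintro (h1 | h2)
          · exact hr h1
          · exact havoid h2⟩
      exact side_disjoint ht hx this (mem_side_self ends x v)
    rw [← key b hb hwb, ← key c hc hwc]
open Classical in
/-- The finset of ordered crossing pairs of `S`. -/
noncomputable def crossF (ends : E → Sym2 V) [Fintype V] (S : Set V) : Finset (V × V) :=
  Finset.univ.filter (fun p => (Gr ends).Adj p.1 p.2 ∧ p.1 ∈ S ∧ p.2 ∉ S)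

lemma mem_crossF {ends : E → Sym2 V} [Fintype V] {S : Set V} {p : V × V} :
    p ∈ crossF ends S ↔ (Gr ends).Adj p.1 p.2 ∧ p.1 ∈ S ∧ p.2 ∉ S := by
  classical
  simp [crossF]

lemma cut_eq_crossF [Fintype V] {ends : E → Sym2 V}
    (hinj : ∀ e e' (a b : V), a ≠ b → ends e = s(a, b) → ends e' = s(a, b) → e = e')
    (S : Set V) : cut ends S = (crossF ends S).card := by
  classical
  rw [cut, ← Nat.card_eq_finsetCard]
  set f : {p : V × V // p ∈ crossF ends S} →
      {e : E // ∃ a b, ends e = s(a, b) ∧ a ∈ S ∧ b ∉ S} := fun q =>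
    ⟨Classical.choose (mem_crossF.mp q.2).1.2,
      q.1.1, q.1.2, Classical.choose_spec (mem_crossF.mp q.2).1.2,
      (mem_crossF.mp q.2).2.1, (mem_crossF.mp q.2).2.2⟩ with hfdef
  have hf : ∀ q, ends (f q).1 = s(q.1.1, q.1.2) := fun q =>
    Classical.choose_spec (mem_crossF.mp q.2).1.2
  symm
  refine Nat.card_eq_of_bijective f ⟨?_, ?_⟩
  · rintro q q' heq
    have h1 := hf q
    have h2 := hf q'
    rw [Subtype.ext_iff] at heq
    rw [heq, h2] at h1
    rw [Sym2.eq_iff] at h1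
    obtain ⟨hq, hq1, hq2⟩ := mem_crossF.mp q.2
    obtain ⟨hq', hq1', hq2'⟩ := mem_crossF.mp q'.2
    rcases h1 with ⟨ha, hb⟩ | ⟨ha, hb⟩
    · exact Subtype.ext (Prod.ext ha.symm hb.symm)
    · exact absurd (ha ▸ hq1') hq2
  · rintro ⟨e, a, b, hab, ha, hb⟩
    have hadj : (Gr ends).Adj a b := ⟨fun h => hb (h ▸ ha), e, hab⟩
    have hmem : (a, b) ∈ crossF ends S := mem_crossF.mpr ⟨hadj, ha, hb⟩
    refine ⟨⟨(a, b), hmem⟩, Subtype.ext ?_⟩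
    have := hf ⟨(a, b), hmem⟩
    exact hinj _ e a b hadj.1 this hab

lemma crossF_side [Fintype V] {ends : E → Sym2 V} {a b : V} (ht : (Gr ends).IsTree)
    (hab : (Gr ends).Adj a b) : crossF ends (side ends a b) = {(b, a)} := by
  classical
  ext p
  rw [mem_crossF, Finset.mem_singleton]
  constructor
  · rintro ⟨hadj, h1, h2⟩
    have h2' : p.2 ∈ side ends b a := by
      rcases side_union (a := a) (b := b) ht p.2 with h | h
      · exact absurd h h2
      · exact h
    by_cases hs : s(p.1, p.2) = s(a, b)
    · rw [Sym2.eq_iff] at hs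
      rcases hs with ⟨ha', hb'⟩ | ⟨ha', hb'⟩
      · exact absurd (ha' ▸ h1) (not_mem_side ht hab)
      · exact Prod.ext ha' hb'
    · exact absurd (side_extend h1 hadj hs) (fun hc => side_disjoint ht hab hc h2')
  · rintro rfl
    exact ⟨hab.symm, mem_side_self ends a b, not_mem_side ht hab⟩

lemma cut_side_one [Fintype V] {ends : E → Sym2 V} {a b : V} (ht : (Gr ends).IsTree)
    (hinj : ∀ e e' (a b : V), a ≠ b → ends e = s(a, b) → ends e' = s(a, b) → e = e')
    (hab : (Gr ends).Adj a b) : cut ends (side ends a b) = 1 := by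
  rw [cut_eq_crossF hinj, crossF_side ht hab, Finset.card_singleton]

open Classical in
/-- finsum over a set as a finset sum. -/
lemma finsum_mem_set [Fintype V] (S : Set V) (f : V → ℝ) :
    ∑ᶠ v ∈ S, f v = ∑ v ∈ Finset.univ.filter (· ∈ S), f v := by
  rw [← finsum_mem_coe_finset]
  congr 1
  ext v
  simp

/-- The neighborhood finset. -/
noncomputable def NB (ends : E → Sym2 V) [Fintype V] (v : V) : Finset V := by
  classical exact Finset.univ.filter ((Gr ends).Adj v)

lemma mem_NB {ends : E → Sym2 V} [Fintype V] {v b : V} :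
    b ∈ NB ends v ↔ (Gr ends).Adj v b := by
  classical
  simp [NB]

open Classical in
/-- Partition of `V \ {v}` into the sides at `v`: summed version. -/
lemma sum_sides [Fintype V] {M : Type} [AddCommMonoid M] {ends : E → Sym2 V}
    (ht : (Gr ends).IsTree) (v : V) (f : V → M) :
    ∑ b ∈ NB ends v, ∑ w ∈ Finset.univ.filter (· ∈ side ends v b), f w
      = ∑ w ∈ Finset.univ.erase v, f w := by
  classical
  have hex : ∀ w ∈ Finset.univ.erase v, ∃ b, (Gr ends).Adj v b ∧ w ∈ side ends v b := by
    intro w hw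
    exact exists_nbr ht (Finset.mem_erase.mp hw).1
  choose nb hnb1 hnb2 using hex
  set gmap : V → V := fun w =>
    if hw : w = v then v
    else nb w (Finset.mem_erase.mpr ⟨hw, Finset.mem_univ w⟩) with hg
  have hgmap : ∀ w, w ≠ v → (Gr ends).Adj v (gmap w) ∧ w ∈ side ends v (gmap w) := by
    intro w hwv
    simp only [hg]
    rw [dif_neg hwv]
    exact ⟨hnb1 _ _, hnb2 _ _⟩
  rw [← Finset.sum_fiberwise_of_maps_to (g := gmap) (t := NB ends v) ?_ f]
  · refine Finset.sum_congr rfl (fun b hb => Finset.sum_congr ?_ (fun _ _ => rfl))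
    ext w
    rw [Finset.mem_filter, Finset.mem_filter]
    constructor
    · rintro ⟨-, hw⟩
      have hwv : w ≠ v := fun h =>
        side_disjoint ht (mem_NB.mp hb) (h ▸ hw) (mem_side_self ends b v)
      refine ⟨Finset.mem_erase.mpr ⟨hwv, Finset.mem_univ w⟩, ?_⟩
      exact nbr_unique ht (hgmap w hwv).1 (hgmap w hwv).2 (mem_NB.mp hb) hw
    · rintro ⟨hw, heq⟩
      have hwv := (Finset.mem_erase.mp hw).1
      exact ⟨Finset.mem_univ w, heq ▸ (hgmap w hwv).2⟩
  · intro w hw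
    exact mem_NB.mpr (hgmap w (Finset.mem_erase.mp hw).1).1

lemma round_eq_of {x : ℝ} {n : ℤ} (h : |x - n| < 1 / 2) : round x = n := by
  have h0 : round (x - n) = 0 := by
    rw [round_eq_zero_iff]
    constructor
    · have := abs_lt.mp h; linarith [this.1]
    · have := abs_lt.mp h; exact this.2
  have : round (x - n + n) = round (x - n) + n := round_add_intCast _ _
  rw [h0, sub_add_cancel, zero_add] at this
  exact this

section Main

variable [Fintype V] {ends : E → Sym2 V} {φ : V → ℝ} {g : ℤ}

/-- The sum of `φ` over the side of `b` away from `a`. -/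
noncomputable def XX (ends : E → Sym2 V) (φ : V → ℝ) (a b : V) : ℝ :=
  ∑ᶠ v ∈ side ends a b, φ v

/-- The integer approximating that sum. -/
noncomputable def cc (ends : E → Sym2 V) (φ : V → ℝ) (a b : V) : ℤ :=
  round (XX ends φ a b)

/-- The candidate multidegree. -/
noncomputable def ddf (ends : E → Sym2 V) (φ : V → ℝ) (g : ℤ) (v : V) : ℤ :=
  (g - 1) - ∑ b ∈ NB ends v, cc ends φ v b

lemma half_lt (ht : (Gr ends).IsTree)
    (hinj : ∀ e e' (a b : V), a ≠ b → ends e = s(a, b) → ends e' = s(a, b) → e = e')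
    (hnd : Nondegenerate ends φ) {a b : V} (hab : (Gr ends).Adj a b) :
    |XX ends φ a b - (cc ends φ a b : ℝ)| < 1 / 2 := by
  have h1 : cut ends (side ends a b) = 1 := cut_side_one ht hinj hab
  rcases (abs_sub_round (XX ends φ a b)).lt_or_eq with h | h
  · exact h
  · exfalso
    have helem := elementary_side ht hab
    rcases abs_eq (by norm_num : (0:ℝ) ≤ 1 / 2) |>.mp h with h2 | h2
    · refine hnd _ helem (cc ends φ a b) ?_
      rw [ell, h1]
      push_cast
      rw [show (∑ᶠ v ∈ side ends a b, φ v) = XX ends φ a b from rfl]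
      have : XX ends φ a b - (cc ends φ a b : ℝ) = 1 / 2 := h2
      linarith
    · refine hnd _ helem (cc ends φ a b - 1) ?_
      rw [ell, h1]
      push_cast
      rw [show (∑ᶠ v ∈ side ends a b, φ v) = XX ends φ a b from rfl]
      have : XX ends φ a b - (cc ends φ a b : ℝ) = -(1 / 2) := h2
      linarith

lemma compl_sum (ht : (Gr ends).IsTree) (hφ : (∑ v, φ v) = (g : ℝ) - 1)
    {a b : V} (hab : (Gr ends).Adj a b) :
    XX ends φ a b + XX ends φ b a = (g : ℝ) - 1 := by
  classical
  rw [XX, XX, finsum_mem_set, finsum_mem_set]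
  have : Finset.univ.filter (· ∈ side ends b a)
      = Finset.univ.filter (fun v => ¬ (v ∈ side ends a b)) := by
    ext v
    rw [Finset.mem_filter, Finset.mem_filter]
    rw [← compl_side ht hab]
    simp [Set.mem_compl_iff]
  rw [this, Finset.sum_filter_add_sum_filter_not]
  exact hφ

lemma cc_antisym (ht : (Gr ends).IsTree)
    (hinj : ∀ e e' (a b : V), a ≠ b → ends e = s(a, b) → ends e' = s(a, b) → e = e')
    (hnd : Nondegenerate ends φ) (hφ : (∑ v, φ v) = (g : ℝ) - 1)
    {a b : V} (hab : (Gr ends).Adj a b) :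
    cc ends φ a b + cc ends φ b a = g - 1 := by
  have h2 := compl_sum ht hφ hab
  have h3 : round (-XX ends φ a b) = -cc ends φ a b := by
    refine round_eq_of ?_
    rw [show -XX ends φ a b - ((-cc ends φ a b : ℤ) : ℝ)
      = -(XX ends φ a b - (cc ends φ a b : ℝ)) by push_cast; ring, abs_neg]
    exact half_lt ht hinj hnd hab
  have h4 : cc ends φ b a = -cc ends φ a b + (g - 1) := by
    have h5 : XX ends φ b a = -XX ends φ a b + ((g - 1 : ℤ) : ℝ) := by push_cast; linarith
    rw [cc, h5, round_add_intCast, h3]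
  omega

lemma phi_id (ht : (Gr ends).IsTree) (hφ : (∑ v, φ v) = (g : ℝ) - 1) (v : V) :
    φ v = ((g : ℝ) - 1) - ∑ b ∈ NB ends v, XX ends φ v b := by
  classical
  have h1 := sum_sides ht v φ
  have h2 : ∑ b ∈ NB ends v, XX ends φ v b
      = ∑ b ∈ NB ends v, ∑ w ∈ Finset.univ.filter (· ∈ side ends v b), φ w :=
    Finset.sum_congr rfl (fun b _ => finsum_mem_set _ _)
  have h3 : ∑ w ∈ Finset.univ.erase v, φ w + φ v = ∑ w, φ w :=
    Finset.sum_erase_add _ _ (Finset.mem_univ v)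
  rw [h2, h1]
  rw [hφ] at h3
  linarith

lemma ddf_sub_phi (ht : (Gr ends).IsTree) (hφ : (∑ v, φ v) = (g : ℝ) - 1) (v : V) :
    (ddf ends φ g v : ℝ) - φ v
      = ∑ b ∈ NB ends v, (XX ends φ v b - (cc ends φ v b : ℝ)) := by
  rw [Finset.sum_sub_distrib, ddf]
  rw [phi_id ht hφ v]
  push_cast
  ring

end Main
section Main2

variable [Fintype V] {ends : E → Sym2 V} {φ : V → ℝ} {g : ℤ}

open Classical in
lemma key_identity (ht : (Gr ends).IsTree)
    (hinj : ∀ e e' (a b : V), a ≠ b → ends e = s(a, b) → ends e' = s(a, b) → e = e')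
    (hnd : Nondegenerate ends φ) (hφ : (∑ v, φ v) = (g : ℝ) - 1) (S : Set V) :
    ∑ w ∈ Finset.univ.filter (· ∈ S), ((ddf ends φ g w : ℝ) - φ w)
      = ∑ p ∈ crossF ends S, (XX ends φ p.1 p.2 - (cc ends φ p.1 p.2 : ℝ)) := by
  set t : V × V → ℝ := fun p => XX ends φ p.1 p.2 - (cc ends φ p.1 p.2 : ℝ) with hT
  have NB_eq : ∀ w, NB ends w = Finset.univ.filter ((Gr ends).Adj w) := by
    intro w; ext b; rw [mem_NB, Finset.mem_filter]; simp
  have step1 : ∑ w ∈ Finset.univ.filter (· ∈ S), ((ddf ends φ g w : ℝ) - φ w)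
      = ∑ p ∈ Finset.univ.filter
          (fun p : V × V => (Gr ends).Adj p.1 p.2 ∧ p.1 ∈ S), t p := by
    rw [Finset.sum_filter, Finset.sum_filter, Fintype.sum_prod_type]
    refine Finset.sum_congr rfl fun w _ => ?_
    by_cases hw : w ∈ S
    · rw [if_pos hw, ddf_sub_phi ht hφ w, NB_eq w, Finset.sum_filter]
      refine Finset.sum_congr rfl fun b _ => ?_
      by_cases h : (Gr ends).Adj w b <;> simp [h, hw, hT]
    · rw [if_neg hw]
      symm
      refine Finset.sum_eq_zero fun b _ => by simp [hw]
  rw [step1]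
  rw [← Finset.sum_filter_add_sum_filter_not
    (Finset.univ.filter (fun p : V × V => (Gr ends).Adj p.1 p.2 ∧ p.1 ∈ S))
    (fun p => p.2 ∈ S) t]
  have hzero : ∑ p ∈ (Finset.univ.filter
      (fun p : V × V => (Gr ends).Adj p.1 p.2 ∧ p.1 ∈ S)).filter
      (fun p => p.2 ∈ S), t p = 0 := by
    refine Finset.sum_involution (fun p _ => (p.2, p.1)) ?_ ?_ ?_ ?_
    · intro p hp
      rw [Finset.mem_filter, Finset.mem_filter] at hp
      obtain ⟨⟨-, hadj, -⟩, -⟩ := hp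
      have e1 := compl_sum ht hφ hadj
      have e2 := cc_antisym ht hinj hnd hφ hadj
      simp only [hT]
      have : ((cc ends φ p.1 p.2 : ℝ) + (cc ends φ p.2 p.1 : ℝ)) = ((g : ℝ) - 1) := by
        exact_mod_cast congrArg (fun z : ℤ => (z : ℝ)) e2
      linarith
    · intro p hp hne
      rw [Finset.mem_filter, Finset.mem_filter] at hp
      obtain ⟨⟨-, hadj, -⟩, -⟩ := hp
      intro heq
      exact hadj.ne (congrArg Prod.snd heq)
    · intro p hp
      rw [Finset.mem_filter, Finset.mem_filter] at hp ⊢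
      obtain ⟨⟨-, hadj, h1⟩, h2⟩ := hp
      exact ⟨⟨Finset.mem_univ _, hadj.symm, h2⟩, h1⟩
    · intro p hp; rfl
  rw [hzero, zero_add]
  congr 1
  rw [Finset.filter_filter]
  ext p
  rw [Finset.mem_filter, mem_crossF]
  constructor
  · rintro ⟨-, ⟨h1, h2⟩, h3⟩; exact ⟨h1, h2, h3⟩
  · rintro ⟨h1, h2, h3⟩; exact ⟨Finset.mem_univ _, ⟨h1, h2⟩, h3⟩

lemma cross_nonempty (ht : (Gr ends).IsTree) {S : Set V} (hS : S.Nonempty)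
    (hS' : S ≠ Set.univ) : (crossF ends S).Nonempty := by
  obtain ⟨u, hu⟩ := hS
  obtain ⟨w, hw⟩ := Set.ne_univ_iff_exists_notMem S |>.mp hS'
  obtain ⟨p⟩ := ht.1.preconnected u w
  clear hS'
  induction p with
  | nil => exact absurd hu hw
  | @cons x y z h q ih =>
    by_cases hy : y ∈ S
    · exact ih hy hw
    · exact ⟨(x, y), mem_crossF.mpr ⟨h, hu, hy⟩⟩

open Classical in
lemma sum_ddf (ht : (Gr ends).IsTree)
    (hinj : ∀ e e' (a b : V), a ≠ b → ends e = s(a, b) → ends e' = s(a, b) → e = e')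
    (hnd : Nondegenerate ends φ) (hφ : (∑ v, φ v) = (g : ℝ) - 1) :
    ∑ v, ddf ends φ g v = g - 1 := by
  have h := key_identity ht hinj hnd hφ Set.univ
  have h2 : crossF ends (Set.univ : Set V) = ∅ := by
    ext p; rw [mem_crossF]; simp
  rw [h2, Finset.sum_empty, Finset.sum_filter] at h
  simp only [Set.mem_univ, if_true] at h
  rw [Finset.sum_sub_distrib, sub_eq_zero] at h
  have : ((∑ v, ddf ends φ g v : ℤ) : ℝ) = ((g - 1 : ℤ) : ℝ) := by
    push_cast
    rw [← hφ]
    exact_mod_cast h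
  exact_mod_cast this

lemma bound_ddf (ht : (Gr ends).IsTree)
    (hinj : ∀ e e' (a b : V), a ≠ b → ends e = s(a, b) → ends e' = s(a, b) → e = e')
    (hnd : Nondegenerate ends φ) (hφ : (∑ v, φ v) = (g : ℝ) - 1)
    {S : Set V} (hS : S.Nonempty) (hS' : S ≠ Set.univ) :
    |(∑ᶠ v ∈ S, (ddf ends φ g v : ℝ)) - ∑ᶠ v ∈ S, φ v| < (cut ends S : ℝ) / 2 := by
  have h := key_identity ht hinj hnd hφ S
  rw [finsum_mem_set, finsum_mem_set, ← Finset.sum_sub_distrib, h]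
  have hne := cross_nonempty ht hS hS'
  calc |∑ p ∈ crossF ends S, (XX ends φ p.1 p.2 - (cc ends φ p.1 p.2 : ℝ))|
      ≤ ∑ p ∈ crossF ends S, |XX ends φ p.1 p.2 - (cc ends φ p.1 p.2 : ℝ)| :=
        Finset.abs_sum_le_sum_abs _ _
    _ < ∑ _p ∈ crossF ends S, (1 / 2 : ℝ) := by
        refine Finset.sum_lt_sum_of_nonempty hne fun p hp => ?_
        exact half_lt ht hinj hnd (mem_crossF.mp hp).1
    _ = (cut ends S : ℝ) / 2 := by
        rw [Finset.sum_const, cut_eq_crossF hinj, nsmul_eq_mul]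
        ring

open Classical in
lemma unique_dd (ht : (Gr ends).IsTree)
    (hinj : ∀ e e' (a b : V), a ≠ b → ends e = s(a, b) → ends e' = s(a, b) → e = e')
    (hφ : (∑ v, φ v) = (g : ℝ) - 1) {d1 d2 : V → ℤ}
    (h1sum : ∑ v, d1 v = g - 1) (h2sum : ∑ v, d2 v = g - 1)
    (h1 : ∀ S : Set V, S.Nonempty → S ≠ Set.univ →
      |(∑ᶠ v ∈ S, (d1 v : ℝ)) - ∑ᶠ v ∈ S, φ v| < (cut ends S : ℝ) / 2)
    (h2 : ∀ S : Set V, S.Nonempty → S ≠ Set.univ →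
      |(∑ᶠ v ∈ S, (d2 v : ℝ)) - ∑ᶠ v ∈ S, φ v| < (cut ends S : ℝ) / 2) :
    d1 = d2 := by
  have hside : ∀ a b : V, (Gr ends).Adj a b →
      ∑ w ∈ Finset.univ.filter (· ∈ side ends a b), (d1 w - d2 w) = 0 := by
    intro a b hab
    have hSne : (side ends a b).Nonempty := ⟨b, mem_side_self ends a b⟩
    have hSuniv : side ends a b ≠ Set.univ :=
      Set.ne_univ_iff_exists_notMem _ |>.mpr ⟨a, not_mem_side ht hab⟩
    have hc := cut_side_one ht hinj hab
    have e1 := h1 _ hSne hSuniv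
    have e2 := h2 _ hSne hSuniv
    rw [hc] at e1 e2
    norm_num at e1 e2
    have c1 : ∑ᶠ v ∈ side ends a b, ((d1 v : ℤ) : ℝ)
        = ((∑ w ∈ Finset.univ.filter (· ∈ side ends a b), d1 w : ℤ) : ℝ) := by
      rw [finsum_mem_set]; push_cast; rfl
    have c2 : ∑ᶠ v ∈ side ends a b, ((d2 v : ℤ) : ℝ)
        = ((∑ w ∈ Finset.univ.filter (· ∈ side ends a b), d2 w : ℤ) : ℝ) := by
      rw [finsum_mem_set]; push_cast; rfl
    rw [c1] at e1
    rw [c2] at e2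
    have hn : (∑ w ∈ Finset.univ.filter (· ∈ side ends a b), d1 w)
        - (∑ w ∈ Finset.univ.filter (· ∈ side ends a b), d2 w) = 0 := by
      rw [← Int.abs_lt_one_iff]
      have habs : |(((∑ w ∈ Finset.univ.filter (· ∈ side ends a b), d1 w)
          - (∑ w ∈ Finset.univ.filter (· ∈ side ends a b), d2 w) : ℤ) : ℝ)| < 1 := by
        rw [Int.cast_sub, abs_lt]
        constructor <;> linarith [(abs_lt.mp e1).1, (abs_lt.mp e1).2,
          (abs_lt.mp e2).1, (abs_lt.mp e2).2]
      exact_mod_cast habs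
    rw [Finset.sum_sub_distrib]
    omega
  funext v
  have htot : ∑ w, (d1 w - d2 w) = 0 := by
    rw [Finset.sum_sub_distrib, h1sum, h2sum]; ring
  have hpart := sum_sides (M := ℤ) ht v (fun w => d1 w - d2 w)
  have hzero : ∑ b ∈ NB ends v, ∑ w ∈ Finset.univ.filter (· ∈ side ends v b),
      (d1 w - d2 w) = 0 :=
    Finset.sum_eq_zero fun b hb => hside v b (mem_NB.mp hb)
  rw [hzero] at hpart
  have := Finset.sum_erase_add Finset.univ (fun w => d1 w - d2 w) (Finset.mem_univ v)
  rw [htot, ← hpart] at this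
  simp only [zero_add] at this
  omega

end Main2

/-- For a multigraph of loop-free circuit rank 0 and a nondegenerate
`φ ∈ V(Γ)`, there exists a unique `dd : V → ℤ` with `Σ dd = g − 1` such that
`|Σ_{v∈S} dd v − Σ_{v∈S} φ v| < cut(S)/2` for every nonempty proper `S ⊊ V`
(a `φ`-stable multidegree of a line bundle). -/
theorem statement5 (V E : Type) [Fintype V] (ends : E → Sym2 V)
    (hrk : RankZero ends) (g : ℤ)
    (φ : V → ℝ) (hφ : (∑ v, φ v) = (g : ℝ) - 1)
    (hnd : Nondegenerate ends φ) :
    ∃! dd : V → ℤ, (∑ v, dd v) = g - 1 ∧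
      ∀ S : Set V, S.Nonempty → S ≠ Set.univ →
        |(∑ᶠ v ∈ S, (dd v : ℝ)) - ∑ᶠ v ∈ S, φ v| < (cut ends S : ℝ) / 2 := by
  obtain ⟨ht, hinj⟩ := tree_and_inj ends hrk
  refine ⟨ddf ends φ g,
    ⟨sum_ddf ht hinj hnd hφ, fun S hS hS' => bound_ddf ht hinj hnd hφ hS hS'⟩, ?_⟩
  rintro dd' ⟨hsum', hb'⟩
  exact unique_dd ht hinj hφ hsum' (sum_ddf ht hinj hnd hφ) hb'
    (fun S hS hS' => bound_ddf ht hinj hnd hφ hS hS')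

end ThetaPaper
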